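/- arXiv:2204.01853 — 11 statements merged into one kernel-verified Lean document; each statement's English description precedes it below -/
import Mathlib

section
/- Let (L,[·,·,·];θ) be a Lie triple system with a representation (V,θ), let T: V → L be a linear map, and define T̂ ∈ End(L ⊕ V) by T̂(x, u) = (T(u), 0). Then T is an O-operator if and only if T̂ is a Rota-Baxter operator of weight 0 on the semidirect product Lie triple system L ⊕ V. -/
variable {F L V : Type*} [Field F] [CharZero F]
  [AddCommGroup L] [Module F L] [AddCommGroup V] [Module F V]

/-- `D(x,y) := θ(y,x) − θ(x,y)`. -/
def Dmap (θ : L →ₗ[F] L →ₗ[F] Module.End F V) (x y : L) : Module.End F V :=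
  θ y x - θ x y

/-- The axioms of a Lie triple system bracket. -/
def IsLTS (b : L →ₗ[F] L →ₗ[F] L →ₗ[F] L) : Prop :=
  (∀ x z, b x x z = 0) ∧
  (∀ x y z, b x y z + b y z x + b z x y = 0) ∧
  (∀ x y z t e, b x y (b z t e) = b (b x y z) t e + b z (b x y t) e + b z t (b x y e))

/-- The axioms of a representation of a Lie triple system on `V`. -/
def IsLTSRep (b : L →ₗ[F] L →ₗ[F] L →ₗ[F] L)
    (θ : L →ₗ[F] L →ₗ[F] Module.End F V) : Prop :=
  (∀ x y z t, θ z t * θ x y - θ y t * θ x z - θ x (b y z t) + Dmap θ y z * θ x t = 0) ∧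
  (∀ x y z t, θ z t * Dmap θ x y - Dmap θ x y * θ z t + θ (b x y z) t + θ z (b x y t) = 0)

/-- `T : V → L` is an `𝒪`-operator on the L.t.s `(L, b; θ)`. -/
def IsOOp (b : L →ₗ[F] L →ₗ[F] L →ₗ[F] L)
    (θ : L →ₗ[F] L →ₗ[F] Module.End F V) (T : V →ₗ[F] L) : Prop :=
  ∀ u v w, b (T u) (T v) (T w)
    = T (Dmap θ (T u) (T v) w + θ (T v) (T w) u - θ (T u) (T w) v)

/-- The semidirect product bracket on `L × V`. -/
def sd (b : L →ₗ[F] L →ₗ[F] L →ₗ[F] L)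
    (θ : L →ₗ[F] L →ₗ[F] Module.End F V) (p q r : L × V) : L × V :=
  (b p.1 q.1 r.1, θ q.1 r.1 p.2 - θ p.1 r.1 q.2 + Dmap θ p.1 q.1 r.2)

/-- The lift `T̂ : L ⊕ V → L ⊕ V`, `T̂(x, u) = (T u, 0)`. -/
def hatT (T : V →ₗ[F] L) (p : L × V) : L × V := (T p.2, 0)

/-- `T` is an `𝒪`-operator iff `T̂` is a Rota-Baxter operator of weight `0`
on the semidirect product Lie triple system `L ⊕ V`. -/
theorem oOp_iff_hat_rotaBaxter
    (b : L →ₗ[F] L →ₗ[F] L →ₗ[F] L) (hb : IsLTS b)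
    (θ : L →ₗ[F] L →ₗ[F] Module.End F V) (hθ : IsLTSRep b θ)
    (T : V →ₗ[F] L) :
    IsOOp b θ T ↔
      ∀ p q r : L × V,
        sd b θ (hatT T p) (hatT T q) (hatT T r) =
          hatT T (sd b θ (hatT T p) (hatT T q) r + sd b θ (hatT T p) q (hatT T r)
            + sd b θ p (hatT T q) (hatT T r)) := by
  constructor
  · intro h p q r
    have := h p.2 q.2 r.2
    simp only [sd, hatT, Dmap, Prod.mk.injEq, Prod.fst_add, Prod.snd_add,
      LinearMap.sub_apply, map_zero, LinearMap.zero_apply] at this ⊢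
    constructor
    · rw [this]; congr 1; abel
    · simp
  · intro h u v w
    have := h (0, u) (0, v) (0, w)
    simp only [sd, hatT, Dmap, Prod.mk.injEq, Prod.fst_add, Prod.snd_add,
      LinearMap.sub_apply, map_zero, LinearMap.zero_apply, map_add, map_sub] at this ⊢
    rw [this.1]; congr 1; abel
end

section
/- Let N be a Nijenhuis operator on a Lie triple system (L,[·,·,·]). Then the deformed bracket [x,y,z]_N := [Nx,Ny,z] + [x,Ny,Nz] + [Nx,y,Nz] − N([Nx,y,z] + [x,Ny,z] + [x,y,Nz] − N[x,y,z]) makes (L,[·,·,·]_N) a Lie triple system, and N is a homomorphism of Lie triple systems from (L,[·,·,·]_N) to (L,[·,·,·]), i.e. N([x,y,z]_N) = [Nx,Ny,Nz]. -/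
set_option linter.unusedSectionVars false
set_option maxHeartbeats 2000000


variable {F L V : Type*} [Field F] [CharZero F]
  [AddCommGroup L] [Module F L] [AddCommGroup V] [Module F V]

/-- The bracket deformed by a Nijenhuis operator `N`. -/
def nijBracket (b : L →ₗ[F] L →ₗ[F] L →ₗ[F] L) (N : L →ₗ[F] L) (x y z : L) : L :=
  b (N x) (N y) z + b x (N y) (N z) + b (N x) y (N z)
    - N (b (N x) y z + b x (N y) z + b x y (N z) - N (b x y z))

section NijAux

variable (b : L →ₗ[F] L →ₗ[F] L →ₗ[F] L) (N : L →ₗ[F] L)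

private lemma nadd₁ (u v y z : L) :
    nijBracket b N (u + v) y z = nijBracket b N u y z + nijBracket b N v y z := by
  simp only [nijBracket, map_add, map_sub, LinearMap.add_apply]; abel

private lemma nadd₂ (x u v z : L) :
    nijBracket b N x (u + v) z = nijBracket b N x u z + nijBracket b N x v z := by
  simp only [nijBracket, map_add, map_sub, LinearMap.add_apply]; abel

private lemma nadd₃ (x y u v : L) :
    nijBracket b N x y (u + v) = nijBracket b N x y u + nijBracket b N x y v := by
  simp only [nijBracket, map_add, map_sub, LinearMap.add_apply]; abel

private lemma nsub₁ (u v y z : L) :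
    nijBracket b N (u - v) y z = nijBracket b N u y z - nijBracket b N v y z := by
  simp only [nijBracket, map_add, map_sub, LinearMap.add_apply, LinearMap.sub_apply]; abel

private lemma nsub₂ (x u v z : L) :
    nijBracket b N x (u - v) z = nijBracket b N x u z - nijBracket b N x v z := by
  simp only [nijBracket, map_add, map_sub, LinearMap.add_apply, LinearMap.sub_apply]; abel

private lemma nsub₃ (x y u v : L) :
    nijBracket b N x y (u - v) = nijBracket b N x y u - nijBracket b N x y v := by
  simp only [nijBracket, map_add, map_sub, LinearMap.add_apply, LinearMap.sub_apply]; abel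

private lemma nsmul₁ (s : F) (u y z : L) :
    nijBracket b N (s • u) y z = s • nijBracket b N u y z := by
  simp only [nijBracket, map_smul, map_add, map_sub, LinearMap.smul_apply]; module

private lemma nsmul₂ (s : F) (x u z : L) :
    nijBracket b N x (s • u) z = s • nijBracket b N x u z := by
  simp only [nijBracket, map_smul, map_add, map_sub, LinearMap.smul_apply]; module

private lemma nsmul₃ (s : F) (x y u : L) :
    nijBracket b N x y (s • u) = s • nijBracket b N x y u := by
  simp only [nijBracket, map_smul, map_add, map_sub, LinearMap.smul_apply]; module

private def p1f : L → L → L → L := fun x y z =>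
  b (N x) y z + b x (N y) z + b x y (N z) - N (b x y z)

private def nijP (l : F) : L → L → L → L := fun x y z =>
  b x y z + l • p1f b N x y z + (l * l) • nijBracket b N x y z

private def bf : L → L → L → L := fun x y z => b x y z

private def fdef (c d : L → L → L → L) (x y z t e : L) : L :=
  c x y (d z t e) - c (d x y z) t e - c z (d x y t) e - c z t (d x y e)

private lemma nij_star (hN : ∀ x y z, b (N x) (N y) (N z) = N (nijBracket b N x y z))
    (l : F) (x y z : L) :
    nijP b N l x y z + l • N (nijP b N l x y z)
      = b (x + l • N x) (y + l • N y) (z + l • N z) := by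
  have h := hN x y z
  simp only [nijBracket, p1f, nijP, map_add, map_sub, map_smul,
    LinearMap.add_apply, LinearMap.sub_apply, LinearMap.smul_apply] at h ⊢
  linear_combination (norm := module) (-(l * l * l)) • h

private lemma nij_key (hb : IsLTS b)
    (hN : ∀ x y z, b (N x) (N y) (N z) = N (nijBracket b N x y z))
    (l : F) (x y z t e : L) :
    fdef (nijP b N l) (nijP b N l) x y z t e
      + l • N (fdef (nijP b N l) (nijP b N l) x y z t e) = 0 := by
  have e1 : nijP b N l x y (nijP b N l z t e) + l • N (nijP b N l x y (nijP b N l z t e))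
      = b (x + l • N x) (y + l • N y) (b (z + l • N z) (t + l • N t) (e + l • N e)) := by
    rw [nij_star b N hN l x y (nijP b N l z t e), nij_star b N hN l z t e]
  have e2 : nijP b N l (nijP b N l x y z) t e + l • N (nijP b N l (nijP b N l x y z) t e)
      = b (b (x + l • N x) (y + l • N y) (z + l • N z)) (t + l • N t) (e + l • N e) := by
    rw [nij_star b N hN l (nijP b N l x y z) t e, nij_star b N hN l x y z]
  have e3 : nijP b N l z (nijP b N l x y t) e + l • N (nijP b N l z (nijP b N l x y t) e)
      = b (z + l • N z) (b (x + l • N x) (y + l • N y) (t + l • N t)) (e + l • N e) := by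
    rw [nij_star b N hN l z (nijP b N l x y t) e, nij_star b N hN l x y t]
  have e4 : nijP b N l z t (nijP b N l x y e) + l • N (nijP b N l z t (nijP b N l x y e))
      = b (z + l • N z) (t + l • N t) (b (x + l • N x) (y + l • N y) (e + l • N e)) := by
    rw [nij_star b N hN l z t (nijP b N l x y e), nij_star b N hN l x y e]
  have hfi := hb.2.2 (x + l • N x) (y + l • N y) (z + l • N z) (t + l • N t) (e + l • N e)
  simp only [fdef, map_sub, map_add, smul_sub, smul_add]
  linear_combination (norm := module) e1 - e2 - e3 - e4 + hfi

private lemma nij_poly (l : F) (x y z t e : L) :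
    fdef (nijP b N l) (nijP b N l) x y z t e
      = fdef (bf b) (bf b) x y z t e
        + l • (fdef (bf b) (p1f b N) x y z t e + fdef (p1f b N) (bf b) x y z t e)
        + (l * l) • (fdef (bf b) (nijBracket b N) x y z t e
            + fdef (p1f b N) (p1f b N) x y z t e
            + fdef (nijBracket b N) (bf b) x y z t e)
        + (l * l * l) • (fdef (p1f b N) (nijBracket b N) x y z t e
            + fdef (nijBracket b N) (p1f b N) x y z t e)
        + (l * l * l * l) • fdef (nijBracket b N) (nijBracket b N) x y z t e := by
  simp only [fdef, nijP, p1f, bf, map_add, map_sub, map_smul,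
    LinearMap.add_apply, LinearMap.sub_apply, LinearMap.smul_apply,
    nadd₁, nadd₂, nadd₃, nsub₁, nsub₂, nsub₃, nsmul₁, nsmul₂, nsmul₃]
  module

private lemma extract6 {r0 r1 r2 r3 r4 r5 : L}
    (h : ∀ l : F, r0 + l • r1 + l ^ 2 • r2 + l ^ 3 • r3 + l ^ 4 • r4 + l ^ 5 • r5 = 0) :
    r1 = 0 ∧ r2 = 0 ∧ r3 = 0 ∧ r4 = 0 := by
  have e0 := h 0
  have e1 := h 1
  have e2 := h 2
  have e3 := h 3
  have e4 := h 4
  have e5 := h 5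
  refine ⟨?_, ?_, ?_, ?_⟩
  · linear_combination (norm := module) (-137/60 : F) • e0 + (5 : F) • e1 + (-5 : F) • e2
      + (10/3 : F) • e3 + (-5/4 : F) • e4 + (1/5 : F) • e5
  · linear_combination (norm := module) (15/8 : F) • e0 + (-77/12 : F) • e1 + (107/12 : F) • e2
      + (-13/2 : F) • e3 + (61/24 : F) • e4 + (-5/12 : F) • e5
  · linear_combination (norm := module) (-17/24 : F) • e0 + (71/24 : F) • e1 + (-59/12 : F) • e2
      + (49/12 : F) • e3 + (-41/24 : F) • e4 + (7/24 : F) • e5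
  · linear_combination (norm := module) (1/8 : F) • e0 + (-7/12 : F) • e1 + (13/12 : F) • e2
      + (-1 : F) • e3 + (11/24 : F) • e4 + (-1/12 : F) • e5

private lemma nij_fi (hb : IsLTS b)
    (hN : ∀ x y z, b (N x) (N y) (N z) = N (nijBracket b N x y z))
    (x y z t e : L) :
    fdef (nijBracket b N) (nijBracket b N) x y z t e = 0 := by
  have hall : ∀ l : F,
      fdef (bf b) (bf b) x y z t e
      + l • ((fdef (bf b) (p1f b N) x y z t e + fdef (p1f b N) (bf b) x y z t e)
          + N (fdef (bf b) (bf b) x y z t e))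
      + l ^ 2 • ((fdef (bf b) (nijBracket b N) x y z t e + fdef (p1f b N) (p1f b N) x y z t e
            + fdef (nijBracket b N) (bf b) x y z t e)
          + N (fdef (bf b) (p1f b N) x y z t e) + N (fdef (p1f b N) (bf b) x y z t e))
      + l ^ 3 • ((fdef (p1f b N) (nijBracket b N) x y z t e
            + fdef (nijBracket b N) (p1f b N) x y z t e)
          + N (fdef (bf b) (nijBracket b N) x y z t e) + N (fdef (p1f b N) (p1f b N) x y z t e)
          + N (fdef (nijBracket b N) (bf b) x y z t e))
      + l ^ 4 • (fdef (nijBracket b N) (nijBracket b N) x y z t e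
          + N (fdef (p1f b N) (nijBracket b N) x y z t e)
          + N (fdef (nijBracket b N) (p1f b N) x y z t e))
      + l ^ 5 • (N (fdef (nijBracket b N) (nijBracket b N) x y z t e)) = 0 := by
    intro l
    have hk := nij_key b N hb hN l x y z t e
    rw [nij_poly b N l x y z t e] at hk
    simp only [map_add, map_smul] at hk
    linear_combination (norm := module) hk
  have hq0 : fdef (bf b) (bf b) x y z t e = 0 := by
    have h := hb.2.2 x y z t e
    simp only [fdef, bf]
    linear_combination (norm := module) h
  obtain ⟨hr1, hr2, hr3, hr4⟩ := extract6 hall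
  have hn0 : N (fdef (bf b) (bf b) x y z t e) = 0 := by rw [hq0]; simp
  have hq1 : fdef (bf b) (p1f b N) x y z t e + fdef (p1f b N) (bf b) x y z t e = 0 := by
    linear_combination (norm := module) hr1 - hn0
  have hn1 : N (fdef (bf b) (p1f b N) x y z t e) + N (fdef (p1f b N) (bf b) x y z t e) = 0 := by
    have := congrArg N hq1
    simpa only [map_add, map_zero] using this
  have hq2 : fdef (bf b) (nijBracket b N) x y z t e + fdef (p1f b N) (p1f b N) x y z t e
      + fdef (nijBracket b N) (bf b) x y z t e = 0 := by
    linear_combination (norm := module) hr2 - hn1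
  have hn2 : N (fdef (bf b) (nijBracket b N) x y z t e) + N (fdef (p1f b N) (p1f b N) x y z t e)
      + N (fdef (nijBracket b N) (bf b) x y z t e) = 0 := by
    have := congrArg N hq2
    simpa only [map_add, map_zero] using this
  have hq3 : fdef (p1f b N) (nijBracket b N) x y z t e
      + fdef (nijBracket b N) (p1f b N) x y z t e = 0 := by
    linear_combination (norm := module) hr3 - hn2
  have hn3 : N (fdef (p1f b N) (nijBracket b N) x y z t e)
      + N (fdef (nijBracket b N) (p1f b N) x y z t e) = 0 := by
    have := congrArg N hq3
    simpa only [map_add, map_zero] using this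
  linear_combination (norm := module) hr4 - hn3

end NijAux

/-- if `N` is a Nijenhuis operator on the L.t.s `(L, b)`, then the deformed
bracket `[·,·,·]_N` is again a Lie triple system bracket, and `N` is a homomorphism of
Lie triple systems from `(L, [·,·,·]_N)` to `(L, [·,·,·])`. -/
theorem nijenhuis_deformed_lts
    (b : L →ₗ[F] L →ₗ[F] L →ₗ[F] L) (hb : IsLTS b)
    (N : L →ₗ[F] L)
    (hN : ∀ x y z, b (N x) (N y) (N z) = N (nijBracket b N x y z)) :
    (∀ x z, nijBracket b N x x z = 0) ∧
    (∀ x y z, nijBracket b N x y z + nijBracket b N y z x + nijBracket b N z x y = 0) ∧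
    (∀ x y z t e,
      nijBracket b N x y (nijBracket b N z t e)
        = nijBracket b N (nijBracket b N x y z) t e
          + nijBracket b N z (nijBracket b N x y t) e
          + nijBracket b N z t (nijBracket b N x y e)) ∧
    (∀ x y z, N (nijBracket b N x y z) = b (N x) (N y) (N z)) := by
  refine ⟨?_, ?_, ?_, fun x y z => (hN x y z).symm⟩
  · intro x z
    have hd := hb.1 (N x) z
    have ha := hb.1 (x + N x) (N z)
    have ha1 := hb.1 x (N z)
    have ha2 := hb.1 (N x) (N z)
    have hc := hb.1 (x + N x) z
    have hc1 := hb.1 x z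
    have hc2 := hb.1 (N x) z
    simp only [map_add, LinearMap.add_apply] at ha hc
    have hc' : b (N x) x z + b x (N x) z = 0 := by
      linear_combination (norm := module) hc - hc1 - hc2
    have hcN : N (b (N x) x z) + N (b x (N x) z) = 0 := by
      have := congrArg N hc'
      simpa only [map_add, map_zero] using this
    have ha1N : N (b x x (N z)) = 0 := by rw [ha1]; simp
    have hxzN : N (N (b x x z)) = 0 := by rw [hc1]; simp
    simp only [nijBracket, map_add, map_sub]
    linear_combination (norm := module) hd + ha - ha1 - ha2 - hcN - ha1N + hxzN
  · intro x y z
    have c1 := hb.2.1 (N x) (N y) z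
    have c2 := hb.2.1 (N y) (N z) x
    have c3 := hb.2.1 (N z) (N x) y
    have c4 : N (b (N x) y z) + N (b y z (N x)) + N (b z (N x) y) = 0 := by
      have := congrArg N (hb.2.1 (N x) y z)
      simpa only [map_add, map_zero] using this
    have c5 : N (b (N y) z x) + N (b z x (N y)) + N (b x (N y) z) = 0 := by
      have := congrArg N (hb.2.1 (N y) z x)
      simpa only [map_add, map_zero] using this
    have c6 : N (b (N z) x y) + N (b x y (N z)) + N (b y (N z) x) = 0 := by
      have := congrArg N (hb.2.1 (N z) x y)
      simpa only [map_add, map_zero] using this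
    have c7 : N (N (b x y z)) + N (N (b y z x)) + N (N (b z x y)) = 0 := by
      have := congrArg N (congrArg N (hb.2.1 x y z))
      simpa only [map_add, map_zero] using this
    simp only [nijBracket, map_add, map_sub]
    linear_combination (norm := module) c1 + c2 + c3 - c4 - c5 - c6 + c7
  · intro x y z t e
    have h := nij_fi b N hb hN x y z t e
    simp only [fdef] at h
    linear_combination (norm := module) h
end

section
/- Let (L,[·,·,·];θ) be a Lie triple system with a representation (V,θ), and let T: V → L be a linear map. Define T̄: L ⊕ V → L ⊕ V by T̄(x + u) = T(u). Then T is an O-operator if and only if T̄ is a Nijenhuis operator on the semidirect product Lie triple system L ⊕ V. -/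
variable {F L V : Type*} [Field F] [CharZero F]
  [AddCommGroup L] [Module F L] [AddCommGroup V] [Module F V]

/-- The lift `T̄ : L ⊕ V → L ⊕ V`, `T̄(x + u) = T u`, i.e. `T̄(x, u) = (T u, 0)`. -/
def barT (T : V →ₗ[F] L) (p : L × V) : L × V := (T p.2, 0)

/-- `T` is an `𝒪`-operator iff `T̄` is a Nijenhuis operator on the
semidirect product Lie triple system `L ⊕ V`. -/
theorem oOp_iff_bar_nijenhuis
    (b : L →ₗ[F] L →ₗ[F] L →ₗ[F] L) (hb : IsLTS b)
    (θ : L →ₗ[F] L →ₗ[F] Module.End F V) (hθ : IsLTSRep b θ)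
    (T : V →ₗ[F] L) :
    IsOOp b θ T ↔
      ∀ p q r : L × V,
        sd b θ (barT T p) (barT T q) (barT T r) =
          barT T (sd b θ (barT T p) (barT T q) r + sd b θ p (barT T q) (barT T r)
              + sd b θ (barT T p) q (barT T r)
            - barT T (sd b θ (barT T p) q r + sd b θ p (barT T q) r + sd b θ p q (barT T r)
                - barT T (sd b θ p q r))) := by
  constructor
  · intro h p q r
    have := h p.2 q.2 r.2
    simp only [sd, barT, Dmap, Prod.ext_iff, Prod.snd_add, Prod.fst_add, Prod.snd_sub,
      Prod.fst_sub, map_zero, map_add, map_sub, LinearMap.sub_apply, LinearMap.add_apply] at *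
    constructor
    · rw [this]; abel
    · abel
  · intro h u v w
    have := h (0, u) (0, v) (0, w)
    simp only [sd, barT, Dmap, Prod.ext_iff, Prod.snd_add, Prod.fst_add, Prod.snd_sub,
      Prod.fst_sub, map_zero, map_add, map_sub, LinearMap.sub_apply, LinearMap.add_apply]
      at this ⊢
    rw [this.1]; abel
end

section
/- Let (L,[·,·,·];θ) be a Lie triple system with a representation (V,θ), and let T: V → L be an O-operator. Then the trilinear operation {u,v,w} := θ(Tv,Tw)u defines a pre-Lie triple system structure on V, i.e. it satisfies: {x5,x1,[x2,x3,x4]_C} = {{x5,x1,x2},x3,x4} − {{x5,x1,x3},x2,x4} + {x2,x3,{x5,x1,x4}}* and {x1,x2,{x5,x3,x4}}* = {{x1,x2,x5}*,x3,x4} + {x5,[x1,x2,x3]_C,x4} + {x5,x3,[x1,x2,x4]_C} for all x1,...,x5 ∈ V, where {x,y,z}* := {z,y,x} − {z,x,y} and [x,y,z]_C := {x,y,z}* + {x,y,z} − {y,x,z}. -/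
variable {F L V : Type*} [Field F] [CharZero F]
  [AddCommGroup L] [Module F L] [AddCommGroup V] [Module F V]

/-- The operation `{u,v,w} := θ(Tv, Tw)u` on `V` induced by an `𝒪`-operator. -/
def preb (θ : L →ₗ[F] L →ₗ[F] Module.End F V) (T : V →ₗ[F] L) (u v w : V) : V :=
  θ (T v) (T w) u

/-- `{x,y,z}* := {z,y,x} − {z,x,y}`. -/
def prebStar (θ : L →ₗ[F] L →ₗ[F] Module.End F V) (T : V →ₗ[F] L) (x y z : V) : V :=
  preb θ T z y x - preb θ T z x y

/-- `[x,y,z]_C := {x,y,z}* + {x,y,z} − {y,x,z}`. -/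
def prebC (θ : L →ₗ[F] L →ₗ[F] Module.End F V) (T : V →ₗ[F] L) (x y z : V) : V :=
  prebStar θ T x y z + preb θ T x y z - preb θ T y x z

/-- if `T` is an `𝒪`-operator, then `{u,v,w} := θ(Tv,Tw)u` is a pre-Lie
triple system structure on `V`. -/
theorem oOp_induces_preLTS
    (b : L →ₗ[F] L →ₗ[F] L →ₗ[F] L) (hb : IsLTS b)
    (θ : L →ₗ[F] L →ₗ[F] Module.End F V) (hθ : IsLTSRep b θ)
    (T : V →ₗ[F] L) (hT : IsOOp b θ T) :
    (∀ x5 x1 x2 x3 x4 : V,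
      preb θ T x5 x1 (prebC θ T x2 x3 x4)
        = preb θ T (preb θ T x5 x1 x2) x3 x4 - preb θ T (preb θ T x5 x1 x3) x2 x4
          + prebStar θ T x2 x3 (preb θ T x5 x1 x4)) ∧
    (∀ x1 x2 x3 x4 x5 : V,
      prebStar θ T x1 x2 (preb θ T x5 x3 x4)
        = preb θ T (prebStar θ T x1 x2 x5) x3 x4 + preb θ T x5 (prebC θ T x1 x2 x3) x4
          + preb θ T x5 x3 (prebC θ T x1 x2 x4)) := by
  have hC : ∀ u v w : V, T (prebC θ T u v w) = b (T u) (T v) (T w) := by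
    intro u v w
    rw [hT u v w]
    congr 1
  constructor
  · intro x5 x1 x2 x3 x4
    have h : θ (T x1) (b (T x2) (T x3) (T x4))
        = θ (T x3) (T x4) * θ (T x1) (T x2) - θ (T x2) (T x4) * θ (T x1) (T x3)
          + Dmap θ (T x2) (T x3) * θ (T x1) (T x4) := by
      have h0 := hθ.1 (T x1) (T x2) (T x3) (T x4)
      rw [← neg_eq_zero] at h0
      rw [← sub_eq_zero, ← h0]; abel
    have h' := LinearMap.congr_fun h x5
    simp only [preb, prebStar, hC, Dmap, Module.End.mul_apply, LinearMap.sub_apply,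
      LinearMap.add_apply, map_sub, map_add] at h' ⊢
    rw [← sub_eq_zero] at h' ⊢
    rw [← h']
  · intro x1 x2 x3 x4 x5
    have h : Dmap θ (T x1) (T x2) * θ (T x3) (T x4)
        = θ (T x3) (T x4) * Dmap θ (T x1) (T x2) + θ (b (T x1) (T x2) (T x3)) (T x4)
          + θ (T x3) (b (T x1) (T x2) (T x4)) := by
      have h0 := hθ.2 (T x1) (T x2) (T x3) (T x4)
      rw [← neg_eq_zero] at h0
      rw [← sub_eq_zero, ← h0]; abel
    have h' := LinearMap.congr_fun h x5
    simp only [preb, prebStar, hC, Dmap, Module.End.mul_apply, LinearMap.sub_apply,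
      LinearMap.add_apply, map_sub, map_add] at h' ⊢
    rw [← sub_eq_zero] at h' ⊢
    rw [← h']
end

section
/- Let T: V → L be an O-operator on a Lie triple system (L,[·,·,·];θ) with representation (V,θ). Then the bracket [u,v,w]_T := D(Tu,Tv)w + θ(Tv,Tw)u − θ(Tu,Tw)v makes (V,[·,·,·]_T) a Lie triple system, and T is a homomorphism of Lie triple systems, i.e. T([u,v,w]_T) = [Tu,Tv,Tw] for all u,v,w ∈ V. -/
variable {F L V : Type*} [Field F] [CharZero F]
  [AddCommGroup L] [Module F L] [AddCommGroup V] [Module F V]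

/-- The descendent bracket `[u,v,w]_T := D(Tu,Tv)w + θ(Tv,Tw)u − θ(Tu,Tw)v` on `V`. -/
def brkT (θ : L →ₗ[F] L →ₗ[F] Module.End F V) (T : V →ₗ[F] L) (u v w : V) : V :=
  Dmap θ (T u) (T v) w + θ (T v) (T w) u - θ (T u) (T w) v

/-- if `T` is an `𝒪`-operator, then `(V, [·,·,·]_T)` is a Lie triple system
and `T` is a homomorphism of Lie triple systems. -/
theorem oOp_descendent_lts
    (b : L →ₗ[F] L →ₗ[F] L →ₗ[F] L) (hb : IsLTS b)
    (θ : L →ₗ[F] L →ₗ[F] Module.End F V) (hθ : IsLTSRep b θ)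
    (T : V →ₗ[F] L) (hT : IsOOp b θ T) :
    (∀ u w, brkT θ T u u w = 0) ∧
    (∀ u v w, brkT θ T u v w + brkT θ T v w u + brkT θ T w u v = 0) ∧
    (∀ u v w s r,
      brkT θ T u v (brkT θ T w s r)
        = brkT θ T (brkT θ T u v w) s r + brkT θ T w (brkT θ T u v s) r
          + brkT θ T w s (brkT θ T u v r)) ∧
    (∀ u v w, T (brkT θ T u v w) = b (T u) (T v) (T w)) := by
  have E1 : ∀ (x y z t : L) (e : V),
      θ z t (θ x y e) - θ y t (θ x z e) - θ x (b y z t) e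
        + (θ z y (θ x t e) - θ y z (θ x t e)) = 0 := by
    intro x y z t e
    have h := DFunLike.congr_fun (hθ.1 x y z t) e
    simpa [Dmap, LinearMap.sub_apply, LinearMap.add_apply, Module.End.mul_apply] using h
  have E2 : ∀ (x y z t : L) (e : V),
      θ z t (θ y x e) - θ z t (θ x y e) - (θ y x (θ z t e) - θ x y (θ z t e))
        + θ (b x y z) t e + θ z (b x y t) e = 0 := by
    intro x y z t e
    have h := DFunLike.congr_fun (hθ.2 x y z t) e
    simpa [Dmap, LinearMap.sub_apply, LinearMap.add_apply, Module.End.mul_apply,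
      map_sub, sub_add_eq_add_sub] using h
  have hT' : ∀ u v w, T (Dmap θ (T u) (T v) w + θ (T v) (T w) u - θ (T u) (T w) v)
      = b (T u) (T v) (T w) := fun u v w => (hT u v w).symm
  refine ⟨?_, ?_, ?_, ?_⟩
  · intro u w
    simp [brkT, Dmap, LinearMap.sub_apply]
  · intro u v w
    simp only [brkT, Dmap, LinearMap.sub_apply]
    abel
  · intro u v w s r
    simp only [brkT, hT']
    simp only [Dmap, LinearMap.sub_apply, LinearMap.add_apply, map_add, map_sub]
    linear_combination (norm := abel1)
      -E1 (T v) (T w) (T s) (T r) u + E1 (T u) (T w) (T s) (T r) v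
      - E2 (T u) (T v) (T s) (T r) w + E2 (T u) (T v) (T w) (T r) s
      - E2 (T u) (T v) (T s) (T w) r + E2 (T u) (T v) (T w) (T s) r
  · intro u v w
    simp only [brkT]
    exact (hT u v w).symm
end

section
/- Let T: V → L be an O-operator on a Lie triple system (L,[·,·,·];θ) with representation (V,θ). Define θ_T: V×V → End(L) by θ_T(u,v)x := [x,Tu,Tv] + T( θ(x,Tv)u − D(x,Tu)v ). Then (L,θ_T) is a representation of the descendent Lie triple system (V,[·,·,·]_T), i.e. θ_T satisfies the two representation identities with respect to the bracket [·,·,·]_T. -/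
variable {F L V : Type*} [Field F] [CharZero F]
  [AddCommGroup L] [Module F L] [AddCommGroup V] [Module F V]

/-- The induced action `θ_T(u,v)x := [x,Tu,Tv] + T(θ(x,Tv)u − D(x,Tu)v)` of `V` on `L`. -/
def thetaT (b : L →ₗ[F] L →ₗ[F] L →ₗ[F] L) (θ : L →ₗ[F] L →ₗ[F] Module.End F V)
    (T : V →ₗ[F] L) (u v : V) (x : L) : L :=
  b x (T u) (T v) + T (θ x (T v) u - Dmap θ x (T u) v)

/-- `D_T(u,v) := θ_T(v,u) − θ_T(u,v)`. -/
def DT (b : L →ₗ[F] L →ₗ[F] L →ₗ[F] L) (θ : L →ₗ[F] L →ₗ[F] Module.End F V)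
    (T : V →ₗ[F] L) (u v : V) (x : L) : L :=
  thetaT b θ T v u x - thetaT b θ T u v x

section Helpers
variable (b : L →ₗ[F] L →ₗ[F] L →ₗ[F] L) (θ : L →ₗ[F] L →ₗ[F] Module.End F V) (T : V →ₗ[F] L)

private lemma skw (hb : IsLTS b) (p q r : L) : b p q r + b q p r = 0 := by
  have h := hb.1 (p + q) r
  simp only [map_add, LinearMap.add_apply] at h
  linear_combination (norm := module) h - hb.1 p r - hb.1 q r

private lemma bcyc1 (hb : IsLTS b) (α β γ p q : L) :
    b (b α β γ) p q + b (b β γ α) p q + b (b γ α β) p q = 0 := by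
  have h := congrArg (fun c : L => b c p q) (hb.2.1 α β γ)
  simp only [map_add, map_zero, LinearMap.add_apply, LinearMap.zero_apply] at h
  linear_combination (norm := module) h

private lemma bskew1 (hb : IsLTS b) (α β γ p q : L) :
    b (b α β γ) p q + b (b β α γ) p q = 0 := by
  have h := congrArg (fun c : L => b c p q) (skw b hb α β γ)
  simp only [map_add, map_zero, LinearMap.add_apply, LinearMap.zero_apply] at h
  linear_combination (norm := module) h

private lemma rep1T (hθ : IsLTSRep b θ) (p q r s : L) (m : V) :
    T (θ r s (θ p q m)) - T (θ q s (θ p r m)) - T (θ p (b q r s) m)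
      + (T (θ r q (θ p s m)) - T (θ q r (θ p s m))) = 0 := by
  have h := DFunLike.congr_fun (hθ.1 p q r s) m
  simp only [Dmap, LinearMap.sub_apply, LinearMap.add_apply, Module.End.mul_apply,
    LinearMap.zero_apply] at h
  have h2 := congrArg T h
  simp only [map_sub, map_add, map_zero] at h2
  linear_combination (norm := module) h2

private lemma rep2T (hθ : IsLTSRep b θ) (p q r s : L) (m : V) :
    (T (θ r s (θ q p m)) - T (θ r s (θ p q m)))
      - (T (θ q p (θ r s m)) - T (θ p q (θ r s m)))
      + T (θ (b p q r) s m) + T (θ r (b p q s) m) = 0 := by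
  have h := DFunLike.congr_fun (hθ.2 p q r s) m
  simp only [Dmap, LinearMap.sub_apply, LinearMap.add_apply, Module.End.mul_apply,
    LinearMap.zero_apply, map_sub] at h
  have h2 := congrArg T h
  simp only [map_sub, map_add, map_zero] at h2
  linear_combination (norm := module) h2

private lemma oopT (hT : IsOOp b θ T) (u v w : V) :
    b (T u) (T v) (T w)
      - (T (θ (T v) (T u) w) - T (θ (T u) (T v) w)
          + T (θ (T v) (T w) u) - T (θ (T u) (T w) v)) = 0 := by
  have h := hT u v w
  simp only [Dmap, LinearMap.sub_apply, map_add, map_sub] at h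
  linear_combination (norm := module) h

private lemma bhT1 (hT : IsOOp b θ T) (p q : L) (u v w : V) :
    b (b (T u) (T v) (T w)) p q
      - (b (T (θ (T v) (T u) w)) p q - b (T (θ (T u) (T v) w)) p q
          + b (T (θ (T v) (T w) u)) p q - b (T (θ (T u) (T w) v)) p q) = 0 := by
  have h := congrArg (fun c : L => b c p q) (hT u v w)
  simp only [Dmap, LinearMap.sub_apply, map_add, map_sub, LinearMap.add_apply] at h
  linear_combination (norm := module) h

private lemma bhT2 (hT : IsOOp b θ T) (p q : L) (u v w : V) :
    b p (b (T u) (T v) (T w)) q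
      - (b p (T (θ (T v) (T u) w)) q - b p (T (θ (T u) (T v) w)) q
          + b p (T (θ (T v) (T w) u)) q - b p (T (θ (T u) (T w) v)) q) = 0 := by
  have h := congrArg (fun c : L => b p c q) (hT u v w)
  simp only [Dmap, LinearMap.sub_apply, map_add, map_sub, LinearMap.add_apply] at h
  linear_combination (norm := module) h

private lemma bhT3 (hT : IsOOp b θ T) (p q : L) (u v w : V) :
    b p q (b (T u) (T v) (T w))
      - (b p q (T (θ (T v) (T u) w)) - b p q (T (θ (T u) (T v) w))
          + b p q (T (θ (T v) (T w) u)) - b p q (T (θ (T u) (T w) v))) = 0 := by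
  have h := congrArg (fun c : L => b p q c) (hT u v w)
  simp only [Dmap, LinearMap.sub_apply, map_add, map_sub, LinearMap.add_apply] at h
  linear_combination (norm := module) h

private lemma thhT1 (hT : IsOOp b θ T) (p : L) (m : V) (u v w : V) :
    T (θ (b (T u) (T v) (T w)) p m)
      - (T (θ (T (θ (T v) (T u) w)) p m) - T (θ (T (θ (T u) (T v) w)) p m)
          + T (θ (T (θ (T v) (T w) u)) p m) - T (θ (T (θ (T u) (T w) v)) p m)) = 0 := by
  have h := congrArg (fun c : L => T (θ c p m)) (hT u v w)
  simp only [Dmap, LinearMap.sub_apply, map_add, map_sub, LinearMap.add_apply] at h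
  linear_combination (norm := module) h

private lemma thhT2 (hT : IsOOp b θ T) (p : L) (m : V) (u v w : V) :
    T (θ p (b (T u) (T v) (T w)) m)
      - (T (θ p (T (θ (T v) (T u) w)) m) - T (θ p (T (θ (T u) (T v) w)) m)
          + T (θ p (T (θ (T v) (T w) u)) m) - T (θ p (T (θ (T u) (T w) v)) m)) = 0 := by
  have h := congrArg (fun c : L => T (θ p c m)) (hT u v w)
  simp only [Dmap, LinearMap.sub_apply, map_add, map_sub, LinearMap.add_apply] at h
  linear_combination (norm := module) h

end Helpers

set_option maxHeartbeats 4000000 in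
/-- if `T` is an `𝒪`-operator, then `(L, θ_T)` is a representation of the
descendent Lie triple system `(V, [·,·,·]_T)`. -/
theorem oOp_induced_representation
    (b : L →ₗ[F] L →ₗ[F] L →ₗ[F] L) (hb : IsLTS b)
    (θ : L →ₗ[F] L →ₗ[F] Module.End F V) (hθ : IsLTSRep b θ)
    (T : V →ₗ[F] L) (hT : IsOOp b θ T) :
    (∀ (x y z t : V) (a : L),
      thetaT b θ T z t (thetaT b θ T x y a) - thetaT b θ T y t (thetaT b θ T x z a)
        - thetaT b θ T x (brkT θ T y z t) a + DT b θ T y z (thetaT b θ T x t a) = 0) ∧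
    (∀ (x y z t : V) (a : L),
      thetaT b θ T z t (DT b θ T x y a) - DT b θ T x y (thetaT b θ T z t a)
        + thetaT b θ T (brkT θ T x y z) t a + thetaT b θ T z (brkT θ T x y t) a = 0) := by
  constructor
  · intro x y z t a
    simp only [thetaT, DT, brkT, Dmap, map_add, map_sub, LinearMap.add_apply,
      LinearMap.sub_apply]
    linear_combination (norm := module) (hb.2.1 (b a (T x) (T y)) (T z) (T t)) + (hb.2.2 a (T x) (T t) (T y) (T z)) - (hb.2.1 (b a (T x) (T z)) (T y) (T t)) - (hb.2.2 a (T x) (T t) (T z) (T y)) - (skw b hb (T z) (T t) (b a (T x) (T y))) + (bhT3 b θ T hT a (T x) t z y) + (skw b hb (T y) (T t) (b a (T x) (T z))) - (bhT3 b θ T hT a (T x) t y z) - (rep2T b θ T hθ a (T x) (T z) (T y) t) - (rep2T b θ T hθ a (T x) (T z) (T t) y) + (rep2T b θ T hθ a (T x) (T y) (T z) t) + (rep2T b θ T hθ a (T x) (T y) (T t) z) - (oopT b θ T hT (θ a (T z) x) y t) + (oopT b θ T hT (θ a (T y) x) z t) - (oopT b θ T hT (θ a (T x) z) y t) + (oopT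 b θ T hT (θ a (T x) y) z t) + (oopT b θ T hT (θ a (T x) t) z y) - (oopT b θ T hT (θ a (T x) t) y z) + (oopT b θ T hT (θ a (T t) x) z y) - (oopT b θ T hT (θ a (T t) x) y z) + (oopT b θ T hT (θ (T x) a z) y t) - (oopT b θ T hT (θ (T x) a y) z t) - (oopT b θ T hT (θ (T x) a t) z y) + (oopT b θ T hT (θ (T x) a t) y z) + (thhT2 b θ T hT a x y z t) + (rep1T b θ T hθ a (T y) (T z) (T t) x)
  · intro x y z t a
    simp only [thetaT, DT, brkT, Dmap, map_add, map_sub, LinearMap.add_apply,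
      LinearMap.sub_apply]
    linear_combination (norm := module) - (hb.2.1 (b a (T z) (T x)) (T y) (T t)) - (hb.2.2 a (T z) (T t) (T x) (T y)) + (hb.2.1 (b a (T z) (T y)) (T x) (T t)) + (hb.2.2 a (T z) (T t) (T y) (T x)) + (bcyc1 b hb a (T y) (T x) (T z) (T t)) - (bskew1 b hb a (T x) (T y) (T z) (T t)) + (skw b hb (T y) (T t) (b a (T z) (T x))) - (bhT3 b θ T hT a (T z) t y x) + (skw b hb (b a (T z) (T x)) (T y) (T t)) + (bhT2 b θ T hT a (T t) y x z) + (hb.2.2 (T y) (T x) a (T z) (T t)) + (hb.2.2 a (T z) (T y) (T x) (T t)) - (skw b hb (T x) (T t) (b a (T z) (T y))) + (bhT3 b θ T hT a (T z) t x y) - (rep1T b θ T hθ (T y) a (T z) (T t) x) + (rep1T b θ T hθ (T x) a (T z) (T t) y) + (rep1T b θ T hθ (T z) a (T y) (T x) t) + (rep1T b θ T hθ (T x) a (T y) (T z) t) + (rep2T b θ T hθ a (T y) (T x) (T z) t) + (rep1T b θ T hθ (T x) a (T y) (T t) z) + (rep2T b θ T hθ a (T y) (T x) (T t) z) - (rep1T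 b θ T hθ (T z) a (T x) (T y) t) - (rep1T b θ T hθ (T y) a (T x) (T z) t) - (rep2T b θ T hθ a (T x) (T y) (T z) t) - (rep1T b θ T hθ (T y) a (T x) (T t) z) - (rep2T b θ T hθ a (T x) (T y) (T t) z) - (oopT b θ T hT (θ a (T z) t) y x) + (oopT b θ T hT (θ a (T z) t) x y) - (oopT b θ T hT (θ a (T t) z) y x) + (oopT b θ T hT (θ a (T t) z) x y) + (oopT b θ T hT (θ (T z) a t) y x) - (oopT b θ T hT (θ (T z) a t) x y) - (oopT b θ T hT (θ (T y) a x) z t) + (oopT b θ T hT (θ (T x) a y) z t) - (thhT2 b θ T hT a t x y z) - (rep1T b θ T hθ a (T x) (T y) (T z) t) - (thhT2 b θ T hT a z x y t) - (rep1T b θ T hθ a (T x) (T y) (T t) z) + (thhT1 b θ T hT a t x y z) - (rep1T b θ T hθ (T z) (T x) (T y) a t) - (rep2T b θ T hθ (T x) (T y) (T z) a t)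
end

section
/- Let T: V → L be an O-operator on a Lie triple system (L,[·,·,·];θ) with representation (V,θ), and let 𝔛 = (x₁,x₂) ∈ L ∧ L. Define ∂_T(𝔛): V → L by ∂_T(𝔛)(v) := T(D(x₁,x₂)v) − [x₁,x₂,Tv]. Then ∂_T(𝔛) is a 1-cocycle of the descendent Lie triple system (V,[·,·,·]_T) with coefficients in the representation (L,θ_T), i.e. D_T(v₁,v₂)∂_T(𝔛)(v₃) − θ_T(v₁,v₃)∂_T(𝔛)(v₂) + θ_T(v₂,v₃)∂_T(𝔛)(v₁) − ∂_T(𝔛)([v₁,v₂,v₃]_T) = 0 for all v₁,v₂,v₃ ∈ V. -/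
variable {F L V : Type*} [Field F] [CharZero F]
  [AddCommGroup L] [Module F L] [AddCommGroup V] [Module F V]

/-- The `1`-cochain `∂_T(𝔛)(v) := T(D(x₁,x₂)v) − [x₁,x₂,Tv]` associated to `𝔛 = (x₁,x₂)`. -/
def partialT (b : L →ₗ[F] L →ₗ[F] L →ₗ[F] L) (θ : L →ₗ[F] L →ₗ[F] Module.End F V)
    (T : V →ₗ[F] L) (x₁ x₂ : L) (v : V) : L :=
  T (Dmap θ x₁ x₂ v) - b x₁ x₂ (T v)


set_option linter.unusedSectionVars false

section Aux

variable (b : L →ₗ[F] L →ₗ[F] L →ₗ[F] L) (θ : L →ₗ[F] L →ₗ[F] Module.End F V)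
  (T : V →ₗ[F] L)

/-- `Φ` applied to the semidirect bracket `[(p,u),(q,v),(r,w)]`, where `Φ(z,w) = z - T w`. -/
def Fm (p : L) (u : V) (q : L) (v : V) (r : L) (w : V) : L :=
  b p q r - T (θ q r u - θ p r v + Dmap θ p q w)

lemma b_anti (hb : IsLTS b) (x y z : L) : b x y z = - b y x z := by
  have h := hb.1 (x + y) z
  simp only [map_add, LinearMap.add_apply, hb.1 x z, hb.1 y z, zero_add, add_zero] at h
  linear_combination (norm := module) h

lemma Fm_anti (hb : IsLTS b) (p : L) (u : V) (q : L) (v : V) (r : L) (w : V) :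
    Fm b θ T p u q v r w = - Fm b θ T q v p u r w := by
  have h := b_anti b hb p q r
  simp only [Fm, Dmap, map_add, map_sub, LinearMap.sub_apply, LinearMap.add_apply] at h ⊢
  linear_combination (norm := module) h

lemma Fm_graph (hT : IsOOp b θ T) (u v w : V) :
    Fm b θ T (T u) u (T v) v (T w) w = 0 := by
  have h := hT u v w
  simp only [Fm, Dmap, map_add, map_sub, LinearMap.sub_apply, LinearMap.add_apply] at h ⊢
  linear_combination (norm := module) h

lemma thetaT_eq (u v : V) (x : L) :
    thetaT b θ T u v x = Fm b θ T x 0 (T u) u (T v) v := by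
  simp only [Fm, thetaT, Dmap, map_add, map_sub, map_zero, LinearMap.sub_apply,
    LinearMap.add_apply, LinearMap.zero_apply]
  module

lemma DT_eq (hb : IsLTS b) (u v : V) (x : L) :
    DT b θ T u v x = Fm b θ T (T u) u (T v) v x 0 := by
  have h1 := hb.2.1 x (T v) (T u)
  have h2 := b_anti b hb (T v) (T u) x
  have h3 := b_anti b hb (T u) x (T v)
  simp only [DT, thetaT, Fm, Dmap, map_add, map_sub, map_zero, LinearMap.sub_apply,
    LinearMap.add_apply, LinearMap.zero_apply] at h1 h2 h3 ⊢
  linear_combination (norm := module) h1 - h2 - h3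

lemma Fm_split3 (p : L) (u : V) (q : L) (v : V) (z : L) (a : V) :
    Fm b θ T p u q v (T a - z) 0 = Fm b θ T p u q v (T a) a - Fm b θ T p u q v z a := by
  simp only [Fm, Dmap, map_add, map_sub, map_zero, LinearMap.sub_apply,
    LinearMap.add_apply, LinearMap.zero_apply]
  module

lemma Fm_split1 (z : L) (a : V) (q : L) (v : V) (r : L) (w : V) :
    Fm b θ T (T a - z) 0 q v r w = Fm b θ T (T a) a q v r w - Fm b θ T z a q v r w := by
  simp only [Fm, Dmap, map_add, map_sub, map_zero, LinearMap.sub_apply,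
    LinearMap.add_apply, LinearMap.zero_apply]
  module

lemma der2 (hθ : IsLTSRep b θ) (x₁ x₂ : L) (p : L) (u : V) (q : L) (v : V) (r : L) (w : V) :
    Dmap θ x₁ x₂ (θ q r u - θ p r v + Dmap θ p q w)
      = (θ q r (Dmap θ x₁ x₂ u) - θ (b x₁ x₂ p) r v + Dmap θ (b x₁ x₂ p) q w)
        + (θ (b x₁ x₂ q) r u - θ p r (Dmap θ x₁ x₂ v) + Dmap θ p (b x₁ x₂ q) w)
        + (θ q (b x₁ x₂ r) u - θ p (b x₁ x₂ r) v + Dmap θ p q (Dmap θ x₁ x₂ w)) := by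
  have i1 := DFunLike.congr_fun (hθ.2 x₁ x₂ q r) u
  have i2 := DFunLike.congr_fun (hθ.2 x₁ x₂ p r) v
  have i3a := DFunLike.congr_fun (hθ.2 x₁ x₂ q p) w
  have i3b := DFunLike.congr_fun (hθ.2 x₁ x₂ p q) w
  simp only [Dmap, map_add, map_sub, LinearMap.sub_apply, LinearMap.add_apply,
    Module.End.mul_apply, LinearMap.zero_apply] at i1 i2 i3a i3b ⊢
  linear_combination (norm := module) i2 + i3b - i1 - i3a

lemma der (hb : IsLTS b) (hθ : IsLTSRep b θ) (x₁ x₂ : L)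
    (p : L) (u : V) (q : L) (v : V) (r : L) (w : V) :
    b x₁ x₂ (b p q r) - T (Dmap θ x₁ x₂ (θ q r u - θ p r v + Dmap θ p q w))
      = Fm b θ T (b x₁ x₂ p) (Dmap θ x₁ x₂ u) q v r w
        + Fm b θ T p u (b x₁ x₂ q) (Dmap θ x₁ x₂ v) r w
        + Fm b θ T p u q v (b x₁ x₂ r) (Dmap θ x₁ x₂ w) := by
  have h1 := hb.2.2 x₁ x₂ p q r
  have h2 := congrArg T (der2 b θ hθ x₁ x₂ p u q v r w)
  simp only [Fm, Dmap, map_add, map_sub, LinearMap.sub_apply, LinearMap.add_apply] at h1 h2 ⊢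
  linear_combination (norm := module) h1 - h2

end Aux

/-- `∂_T(𝔛)` is a `1`-cocycle of the descendent Lie triple system
`(V, [·,·,·]_T)` with coefficients in the representation `(L, θ_T)`. -/
theorem partialT_is_one_cocycle
    (b : L →ₗ[F] L →ₗ[F] L →ₗ[F] L) (hb : IsLTS b)
    (θ : L →ₗ[F] L →ₗ[F] Module.End F V) (hθ : IsLTSRep b θ)
    (T : V →ₗ[F] L) (hT : IsOOp b θ T) (x₁ x₂ : L) :
    ∀ v₁ v₂ v₃ : V,
      DT b θ T v₁ v₂ (partialT b θ T x₁ x₂ v₃)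
        - thetaT b θ T v₁ v₃ (partialT b θ T x₁ x₂ v₂)
        + thetaT b θ T v₂ v₃ (partialT b θ T x₁ x₂ v₁)
        - partialT b θ T x₁ x₂ (brkT θ T v₁ v₂ v₃) = 0 := by
  intro v₁ v₂ v₃
  have hpt : ∀ v, partialT b θ T x₁ x₂ v = T (Dmap θ x₁ x₂ v) - b x₁ x₂ (T v) :=
    fun _ => rfl
  have e1 : DT b θ T v₁ v₂ (partialT b θ T x₁ x₂ v₃)
      = - Fm b θ T (T v₁) v₁ (T v₂) v₂ (b x₁ x₂ (T v₃)) (Dmap θ x₁ x₂ v₃) := by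
    rw [DT_eq b θ T hb, hpt v₃, Fm_split3, Fm_graph b θ T hT, zero_sub]
  have e2 : thetaT b θ T v₁ v₃ (partialT b θ T x₁ x₂ v₂)
      = Fm b θ T (T v₁) v₁ (b x₁ x₂ (T v₂)) (Dmap θ x₁ x₂ v₂) (T v₃) v₃ := by
    rw [thetaT_eq, hpt v₂, Fm_split1, Fm_graph b θ T hT, zero_sub,
      Fm_anti b θ T hb, neg_neg]
  have e3 : thetaT b θ T v₂ v₃ (partialT b θ T x₁ x₂ v₁)
      = - Fm b θ T (b x₁ x₂ (T v₁)) (Dmap θ x₁ x₂ v₁) (T v₂) v₂ (T v₃) v₃ := by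
    rw [thetaT_eq, hpt v₁, Fm_split1, Fm_graph b θ T hT, zero_sub]
  have e4 : partialT b θ T x₁ x₂ (brkT θ T v₁ v₂ v₃)
      = - (Fm b θ T (b x₁ x₂ (T v₁)) (Dmap θ x₁ x₂ v₁) (T v₂) v₂ (T v₃) v₃
          + Fm b θ T (T v₁) v₁ (b x₁ x₂ (T v₂)) (Dmap θ x₁ x₂ v₂) (T v₃) v₃
          + Fm b θ T (T v₁) v₁ (T v₂) v₂ (b x₁ x₂ (T v₃)) (Dmap θ x₁ x₂ v₃)) := by
    have hder := der b θ T hb hθ x₁ x₂ (T v₁) v₁ (T v₂) v₂ (T v₃) v₃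
    have hbrk := congrArg (b x₁ x₂) (hT v₁ v₂ v₃).symm
    simp only [partialT, brkT, Fm, Dmap, map_add, map_sub, LinearMap.sub_apply,
      LinearMap.add_apply] at hder hbrk ⊢
    linear_combination (norm := module) - hbrk - hder
  rw [e1, e2, e3, e4]
  abel
end

section
/- Let T and T' be two O-operators on the same Lie triple system (L,[·,·,·];θ) with representation (V,θ), and let (φ,ψ) be a morphism of O-operators from T to T'. Then the induced representations intertwine via φ: φ ∘ θ_T(u,v) = θ_{T'}(ψ(u),ψ(v)) ∘ φ for all u,v ∈ V, where θ_T(u,v)x := [x,Tu,Tv] + T( θ(x,Tv)u − D(x,Tu)v ) and analogously for θ_{T'}. -/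
variable {F L V : Type*} [Field F] [CharZero F]
  [AddCommGroup L] [Module F L] [AddCommGroup V] [Module F V]

/-- for a morphism `(φ, ψ)` of `𝒪`-operators from `T` to `T'`, the induced
representations intertwine via `φ`: `φ ∘ θ_T(u,v) = θ_{T'}(ψu, ψv) ∘ φ`. -/
theorem oOp_morphism_intertwines_representations
    (b : L →ₗ[F] L →ₗ[F] L →ₗ[F] L) (hb : IsLTS b)
    (θ : L →ₗ[F] L →ₗ[F] Module.End F V) (hθ : IsLTSRep b θ)
    (T T' : V →ₗ[F] L) (hT : IsOOp b θ T) (hT' : IsOOp b θ T')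
    (φ : L →ₗ[F] L) (ψ : V →ₗ[F] V)
    (hφ : ∀ x y z, φ (b x y z) = b (φ x) (φ y) (φ z))
    (hc1 : ∀ u, φ (T u) = T' (ψ u))
    (hc2 : ∀ x y u, ψ (θ x y u) = θ (φ x) (φ y) (ψ u)) :
    ∀ (u v : V) (x : L), φ (thetaT b θ T u v x) = thetaT b θ T' (ψ u) (ψ v) (φ x) := by
  intro u v x
  simp only [thetaT, Dmap, map_add, map_sub, LinearMap.sub_apply, hφ, hc1]
  simp only [hc2, hc1]
end

section
/- Let T and T' be two O-operators on the same Lie triple system (L,[·,·,·];θ) with representation (V,θ), and let (φ,ψ) be a morphism of O-operators from T to T' with ψ invertible. For n ≥ 1 and any (2n−1)-multilinear map f: V^{2n−1} → L, define γ(f)(u₁,…,u_{2n−1}) := φ(f(ψ⁻¹(u₁),…,ψ⁻¹(u_{2n−1}))). Then γ is a cochain map: δ_{T'}(γ(f)) = γ(δ_T(f)), where δ_T is the Yamaguti coboundary of the descendent L.t.s (V,[·,·,·]_T) with coefficients in (L,θ_T) and δ_{T'} is the analogous coboundary for T'. -/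
variable {F L V : Type*} [Field F] [CharZero F]
  [AddCommGroup L] [Module F L] [AddCommGroup V] [Module F V]

/-- Omit the two consecutive entries at (0-based) positions `p` and `p+1`
from a tuple of length `2m+3`, obtaining a tuple of length `2m+1`. -/
def omit2 {m : ℕ} (p : ℕ) (v : Fin (2 * m + 3) → V) (i : Fin (2 * m + 1)) : V :=
  v (if (i : ℕ) < p then ⟨(i : ℕ), by have := i.isLt; omega⟩
     else ⟨(i : ℕ) + 2, by have := i.isLt; omega⟩)

/-- The Yamaguti coboundary `δ : C^{2n−1}(V, L) → C^{2n+1}(V, L)` (here `n = m + 1 ≥ 1`)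
of the Lie triple system `(V, brk)` with coefficients in the representation given by
`θT` (with `D_T(u,v) := θT(v,u) − θT(u,v)`), written with 0-based indices:
`δf(v₀,…,v_{2m+2}) = θT(v_{2m+1},v_{2m+2}) f(v₀,…,v_{2m})
  − θT(v_{2m},v_{2m+2}) f(v₀,…,v_{2m−1},v_{2m+1})
  + Σ_{k=0}^{m} (−1)^{m+k} D_T(v_{2k},v_{2k+1}) f(…,v̂_{2k},v̂_{2k+1},…)
  + Σ_{k=0}^{m} Σ_{j=2k+2}^{2m+2} (−1)^{m+k+1} f(…,v̂_{2k},v̂_{2k+1},…,[v_{2k},v_{2k+1},v_j],…)`. -/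
def yamagutiDelta {m : ℕ} (brk : V → V → V → V) (θT : V → V → L → L)
    (f : (Fin (2 * m + 1) → V) → L) (v : Fin (2 * m + 3) → V) : L :=
  θT (v ⟨2 * m + 1, by omega⟩) (v ⟨2 * m + 2, by omega⟩)
      (f fun i => v ⟨(i : ℕ), by have := i.isLt; omega⟩)
    - θT (v ⟨2 * m, by omega⟩) (v ⟨2 * m + 2, by omega⟩)
        (f fun i =>
          v (if (i : ℕ) = 2 * m then ⟨2 * m + 1, by omega⟩
             else ⟨(i : ℕ), by have := i.isLt; omega⟩))
    + ∑ k : Fin (m + 1),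
        ((-1 : ℤ) ^ (m + (k : ℕ))) •
          (θT (v ⟨2 * (k : ℕ) + 1, by have := k.isLt; omega⟩)
              (v ⟨2 * (k : ℕ), by have := k.isLt; omega⟩) (f (omit2 (2 * (k : ℕ)) v))
            - θT (v ⟨2 * (k : ℕ), by have := k.isLt; omega⟩)
                (v ⟨2 * (k : ℕ) + 1, by have := k.isLt; omega⟩) (f (omit2 (2 * (k : ℕ)) v)))
    + ∑ k : Fin (m + 1), ∑ j : Fin (2 * m + 3),
        if 2 * (k : ℕ) + 2 ≤ (j : ℕ) then
          ((-1 : ℤ) ^ (m + (k : ℕ) + 1)) •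
            f (omit2 (2 * (k : ℕ))
                (Function.update v j
                  (brk (v ⟨2 * (k : ℕ), by have := k.isLt; omega⟩)
                    (v ⟨2 * (k : ℕ) + 1, by have := k.isLt; omega⟩) (v j))))
        else 0

/-- for a morphism `(φ, ψ)` of `𝒪`-operators from `T` to `T'` with `ψ`
invertible, the map `γ(f)(u₁,…,u_{2n−1}) := φ(f(ψ⁻¹u₁,…,ψ⁻¹u_{2n−1}))` is a cochain map:
`δ_{T'}(γ f) = γ(δ_T f)` for every `(2n−1)`-multilinear `f : V^{2n−1} → L`, `n ≥ 1`. -/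
theorem oOp_morphism_cochain_map
    (b : L →ₗ[F] L →ₗ[F] L →ₗ[F] L) (hb : IsLTS b)
    (θ : L →ₗ[F] L →ₗ[F] Module.End F V) (hθ : IsLTSRep b θ)
    (T T' : V →ₗ[F] L) (hT : IsOOp b θ T) (hT' : IsOOp b θ T')
    (φ : L →ₗ[F] L) (ψ : V ≃ₗ[F] V)
    (hφ : ∀ x y z, φ (b x y z) = b (φ x) (φ y) (φ z))
    (hc1 : ∀ u, φ (T u) = T' (ψ u))
    (hc2 : ∀ x y u, ψ (θ x y u) = θ (φ x) (φ y) (ψ u)) :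
    ∀ (m : ℕ) (f : MultilinearMap F (fun _ : Fin (2 * m + 1) => V) L)
      (v : Fin (2 * m + 3) → V),
      yamagutiDelta (brkT θ T') (thetaT b θ T')
          (fun u => φ (f fun i => ψ.symm (u i))) v
        = φ (yamagutiDelta (brkT θ T) (thetaT b θ T) (fun u => f u)
            (fun i => ψ.symm (v i))) := by
  have hT'u : ∀ u, T' u = φ (T (ψ.symm u)) := fun u => by
    rw [hc1]; simp
  have hθφ : ∀ a c d, θ (φ a) (φ c) d = ψ (θ a c (ψ.symm d)) := by
    intro a c d
    rw [hc2]; simp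
  have hbrk : ∀ u w x, ψ.symm (brkT θ T' u w x)
      = brkT θ T (ψ.symm u) (ψ.symm w) (ψ.symm x) := by
    intro u w x
    simp only [brkT, Dmap, hT'u, LinearMap.sub_apply, map_add, map_sub, hθφ]
    simp
  have hθT : ∀ u w x, thetaT b θ T' u w (φ x)
      = φ (thetaT b θ T (ψ.symm u) (ψ.symm w) x) := by
    intro u w x
    rw [thetaT, thetaT, hT'u u, hT'u w, ← hφ, Dmap, Dmap, LinearMap.sub_apply,
      LinearMap.sub_apply, hθφ, hθφ, hθφ, ← map_sub, ← map_sub, ← hc1, ← map_add]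
  intro m f v
  have hupd : ∀ (g : Fin (2 * m + 3) → V) (x : V) (j idx : Fin (2 * m + 3)),
      ψ.symm (Function.update g j x idx)
        = Function.update (fun i => ψ.symm (g i)) j (ψ.symm x) idx := by
    intro g x j idx
    rcases eq_or_ne idx j with h | h
    · subst h; rw [Function.update_self, Function.update_self]
    · rw [Function.update_of_ne h, Function.update_of_ne h]
  rw [yamagutiDelta, yamagutiDelta, map_add φ, map_add φ, map_sub φ, map_sum, map_sum]
  congr 1
  congr 1
  · congr 1
    · exact hθT _ _ _
    · exact hθT _ _ _
  · refine Finset.sum_congr rfl fun k _ => ?_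
    rw [hθT, hθT, ← map_sub φ, ← map_zsmul]
    rfl
  · refine Finset.sum_congr rfl fun k _ => ?_
    rw [map_sum]
    refine Finset.sum_congr rfl fun j _ => ?_
    rw [apply_ite φ, map_zero, map_zsmul]
    split
    · refine congrArg (fun w => ((-1 : ℤ) ^ (m + (k : ℕ) + 1)) • φ (f w))
        (funext fun i => ?_)
      simp only [omit2, hupd, hbrk]
    · rfl
end

section
/- Let T: V → L be an O-operator on a Lie triple system (L,[·,·,·];θ) with representation (V,θ), and let T₁: V → L be a linear map such that T_t := T + tT₁ is an O-operator for every scalar t. Then: (1) T₁ satisfies, for all u,v,w ∈ V, [Tu,Tv,T₁w] + [Tu,T₁v,Tw] + [T₁u,Tv,Tw] = T( D(Tu,T₁v)w + D(T₁u,Tv)w + θ(Tv,T₁w)u + θ(T₁v,Tw)u − θ(Tu,T₁w)v − θ(T₁u,Tw)v ) + T₁( D(Tu,Tv)w + θ(Tv,Tw)u − θ(Tu,Tw)v ) (i.e. T₁ is a 1-cocycle in the cohomology of T); and (2) T₁ is itself an O-operator on (L,[·,·,·];θ). -/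
variable {F L V : Type*} [Field F] [CharZero F]
  [AddCommGroup L] [Module F L] [AddCommGroup V] [Module F V]

lemma aux_coeffs {M : Type*} [AddCommGroup M] [Module F M] (c1 c2 c3 : M)
    (h : ∀ t : F, t • c1 + (t * t) • c2 + (t * t * t) • c3 = 0) :
    c1 = 0 ∧ c3 = 0 := by
  have h1 := h 1
  have h2 := h (-1)
  have h3 := h 2
  have hc2 : (2 : F) • c2 = 0 := by
    linear_combination (norm := module) h1 + h2
  have hc2' : c2 = 0 := by
    rcases smul_eq_zero.mp hc2 with h | h
    · exact absurd h (by norm_num)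
    · exact h
  have hc3 : (6 : F) • c3 = 0 := by
    linear_combination (norm := module) h3 - (2 : F) • h1 - (2 : F) • hc2'
  have hc3' : c3 = 0 := by
    rcases smul_eq_zero.mp hc3 with h | h
    · exact absurd h (by norm_num)
    · exact h
  have hc1 : c1 = 0 := by
    linear_combination (norm := module) h1 - hc2' - hc3'
  exact ⟨hc1, hc3'⟩

/-- if `T_t = T + t T₁` is an `𝒪`-operator for every scalar `t`
(an infinitesimal deformation of the `𝒪`-operator `T`), then (1) `T₁` is a `1`-cocycle
in the cohomology of `T`, and (2) `T₁` is itself an `𝒪`-operator. -/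
theorem infinitesimal_deformation_cocycle_and_oOp
    (b : L →ₗ[F] L →ₗ[F] L →ₗ[F] L) (hb : IsLTS b)
    (θ : L →ₗ[F] L →ₗ[F] Module.End F V) (hθ : IsLTSRep b θ)
    (T T₁ : V →ₗ[F] L) (hT : IsOOp b θ T)
    (hdef : ∀ t : F, IsOOp b θ (T + t • T₁)) :
    (∀ u v w,
      b (T u) (T v) (T₁ w) + b (T u) (T₁ v) (T w) + b (T₁ u) (T v) (T w)
        = T (Dmap θ (T u) (T₁ v) w + Dmap θ (T₁ u) (T v) w
            + θ (T v) (T₁ w) u + θ (T₁ v) (T w) u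
            - θ (T u) (T₁ w) v - θ (T₁ u) (T w) v)
          + T₁ (Dmap θ (T u) (T v) w + θ (T v) (T w) u - θ (T u) (T w) v)) ∧
    IsOOp b θ T₁ := by
  have main : ∀ u v w : V,
      (b (T u) (T v) (T₁ w) + b (T u) (T₁ v) (T w) + b (T₁ u) (T v) (T w)
        - (T (Dmap θ (T u) (T₁ v) w + Dmap θ (T₁ u) (T v) w
            + θ (T v) (T₁ w) u + θ (T₁ v) (T w) u
            - θ (T u) (T₁ w) v - θ (T₁ u) (T w) v)
          + T₁ (Dmap θ (T u) (T v) w + θ (T v) (T w) u - θ (T u) (T w) v)) = 0)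
      ∧ (b (T₁ u) (T₁ v) (T₁ w)
        - T₁ (Dmap θ (T₁ u) (T₁ v) w + θ (T₁ v) (T₁ w) u - θ (T₁ u) (T₁ w) v) = 0) := by
    intro u v w
    refine aux_coeffs (F := F) (M := L) _
      (b (T u) (T₁ v) (T₁ w) + b (T₁ u) (T v) (T₁ w) + b (T₁ u) (T₁ v) (T w)
        - (T (Dmap θ (T₁ u) (T₁ v) w + θ (T₁ v) (T₁ w) u - θ (T₁ u) (T₁ w) v)
          + T₁ (Dmap θ (T u) (T₁ v) w + Dmap θ (T₁ u) (T v) w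
            + θ (T v) (T₁ w) u + θ (T₁ v) (T w) u
            - θ (T u) (T₁ w) v - θ (T₁ u) (T w) v)))
      _ (fun t => ?_)
    have ht := hdef t u v w
    have h0 := hT u v w
    simp only [Dmap, LinearMap.add_apply, LinearMap.smul_apply, LinearMap.sub_apply,
      map_add, map_sub, map_smul] at ht h0 ⊢
    linear_combination (norm := module) ht - h0
  constructor
  · intro u v w
    have := (main u v w).1
    linear_combination (norm := module) this
  · intro u v w
    have := (main u v w).2
    linear_combination (norm := module) this
end

section
/- Let T_t = T + tT₁ and T'_t = T + tT'₁ be two equivalent infinitesimal deformations of an O-operator T on a Lie triple system (L,[·,·,·];θ) with representation (V,θ), where equivalence is witnessed by 𝔛 = (x₁,x₂) ∈ L ∧ L such that (φ_t, ψ_t) with φ_t(x) = x + t[x₁,x₂,x] and ψ_t(u) = u + tD(x₁,x₂)u is a morphism of O-operators from T_t to T'_t for all t. Then T₁ and T'₁ differ by the coboundary of 𝔛: for all u ∈ V, T₁(u) − T'₁(u) = T(D(x₁,x₂)u) − [x₁,x₂,Tu]; in particular T₁ and T'₁ define the same cohomology class. -/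
variable {F L V : Type*} [Field F] [CharZero F]
  [AddCommGroup L] [Module F L] [AddCommGroup V] [Module F V]

/-- if the infinitesimal deformations `T_t = T + tT₁` and `T'_t = T + tT'₁`
of the `𝒪`-operator `T` are equivalent, with equivalence witnessed by `𝔛 = (x₁,x₂)` via
`φ_t(x) = x + t[x₁,x₂,x]`, `ψ_t(u) = u + tD(x₁,x₂)u`, then `T₁ − T'₁ = ∂_T(𝔛)`, i.e.
`T₁(u) − T'₁(u) = T(D(x₁,x₂)u) − [x₁,x₂,Tu]`; in particular `T₁` and `T'₁` define the
same cohomology class. -/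
theorem equivalent_infinitesimal_deformations_cohomologous
    (b : L →ₗ[F] L →ₗ[F] L →ₗ[F] L) (hb : IsLTS b)
    (θ : L →ₗ[F] L →ₗ[F] Module.End F V) (hθ : IsLTSRep b θ)
    (T T₁ T'₁ : V →ₗ[F] L) (hT : IsOOp b θ T)
    (hdef : ∀ t : F, IsOOp b θ (T + t • T₁))
    (hdef' : ∀ t : F, IsOOp b θ (T + t • T'₁))
    (x₁ x₂ : L)
    -- `φ_t` is a morphism of Lie triple systems:
    (hmor1 : ∀ t : F, ∀ x y z,
      b x y z + t • b x₁ x₂ (b x y z)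
        = b (x + t • b x₁ x₂ x) (y + t • b x₁ x₂ y) (z + t • b x₁ x₂ z))
    -- `φ_t ∘ T_t = T'_t ∘ ψ_t`:
    (hmor2 : ∀ t : F, ∀ u : V,
      (T u + t • T₁ u) + t • b x₁ x₂ (T u + t • T₁ u)
        = T (u + t • Dmap θ x₁ x₂ u) + t • T'₁ (u + t • Dmap θ x₁ x₂ u))
    -- `ψ_t ∘ θ(x,y) = θ(φ_t x, φ_t y) ∘ ψ_t`:
    (hmor3 : ∀ t : F, ∀ (x y : L) (u : V),
      θ x y u + t • Dmap θ x₁ x₂ (θ x y u)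
        = θ (x + t • b x₁ x₂ x) (y + t • b x₁ x₂ y) (u + t • Dmap θ x₁ x₂ u)) :
    ∀ u : V, T₁ u - T'₁ u = T (Dmap θ x₁ x₂ u) - b x₁ x₂ (T u) := by
  intro u
  have h1 := hmor2 1 u
  have h2 := hmor2 (-1) u
  simp only [one_smul, neg_smul, map_add, map_neg, map_smul, smul_add, smul_neg,
    neg_neg, neg_add_rev] at h1 h2
  have key : T₁ u + b x₁ x₂ (T u) = T (Dmap θ x₁ x₂ u) + T'₁ u := by
    have h3 : (2:F) • (T₁ u + b x₁ x₂ (T u)) = (2:F) • (T (Dmap θ x₁ x₂ u) + T'₁ u) := by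
      have h := congrArg₂ (· - ·) h1 h2
      rw [two_smul, two_smul]
      abel_nf at h ⊢
      convert h using 2 <;> abel
    exact smul_right_injective L two_ne_zero h3
  rw [sub_eq_sub_iff_add_eq_add]
  exact key
end
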